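/- arXiv:1806.07762 — 4 statements merged into one kernel-verified Lean document; each statement's English description precedes it below -/
import Mathlib

section
/- Let m be a nonnegative integer. Then Σ_{k=0}^{m} β(2k+1)·β(2m-2k+1) = (m + 1/2)·λ(2m+2). -/
open Real Finset Filter

/-- The Dirichlet lambda function at a natural-number argument `j`:
`λ(j) = ∑_{n=0}^∞ 1/(2n+1)^j`. -/
noncomputable def dirichletLambda (j : ℕ) : ℝ := ∑' n : ℕ, 1 / (2 * (n : ℝ) + 1) ^ j

noncomputable def altS (n : ℕ) : ℝ := ∑ c ∈ Finset.range n, (-1) ^ (c + 1) / (c + 1)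

lemma altS_succ (n : ℕ) : altS (n + 1) = altS n + (-1) ^ (n + 1) / (n + 1) := by
  simp [altS, Finset.sum_range_succ]

lemma altS_invariant (p : ℕ) : ∀ d : ℕ,
    (Even d → 0 ≤ (-1 : ℝ) ^ (p + 1) * (altS (p + d) - altS p) ∧
      (-1 : ℝ) ^ (p + 1) * (altS (p + d) - altS p) ≤ 1 / ((p : ℝ) + 1) - 1 / ((p : ℝ) + d + 1)) ∧
    (Odd d → 1 / ((p : ℝ) + d + 1) ≤ (-1 : ℝ) ^ (p + 1) * (altS (p + d) - altS p) ∧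
      (-1 : ℝ) ^ (p + 1) * (altS (p + d) - altS p) ≤ 1 / ((p : ℝ) + 1))
  | 0 => by
    refine ⟨fun _ => ?_, fun h => absurd h (by simp)⟩
    norm_num
  | (d + 1) => by
    have hpd : (0 : ℝ) < (p : ℝ) + d + 1 := by positivity
    have hpd2 : (0 : ℝ) < (p : ℝ) + d + 2 := by positivity
    have hmono : 1 / ((p : ℝ) + d + 2) ≤ 1 / ((p : ℝ) + d + 1) :=
      one_div_le_one_div_of_le hpd (by linarith)
    have hpow : (-1 : ℝ) ^ (p + 1) * (-1) ^ (p + d + 1) = (-1) ^ d := by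
      rw [← pow_add, show p + 1 + (p + d + 1) = 2 * (p + 1) + d from by omega, pow_add, pow_mul]
      norm_num
    have key : (-1 : ℝ) ^ (p + 1) * (altS (p + (d + 1)) - altS p)
        = (-1 : ℝ) ^ (p + 1) * (altS (p + d) - altS p) + (-1) ^ d / ((p : ℝ) + d + 1) := by
      rw [show p + (d + 1) = (p + d) + 1 from rfl, altS_succ]
      push_cast
      linear_combination (1 / ((p : ℝ) + (d : ℝ) + 1)) * hpow
    obtain ⟨ihe, iho⟩ := altS_invariant p d
    constructor
    · intro hev
      have hd : Odd d := by
        obtain ⟨r, hr⟩ := hev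
        exact ⟨r - 1, by omega⟩
      obtain ⟨h1, h2⟩ := iho hd
      rw [key, hd.neg_one_pow]
      push_cast
      have hx : 1 / ((p : ℝ) + ((d : ℝ) + 1) + 1) = 1 / ((p : ℝ) + (d : ℝ) + 2) := by
        rw [show (p : ℝ) + ((d : ℝ) + 1) + 1 = (p : ℝ) + (d : ℝ) + 2 from by ring]
      have hy : (-1 : ℝ) / ((p : ℝ) + (d : ℝ) + 1) = -(1 / ((p : ℝ) + (d : ℝ) + 1)) := by ring
      constructor
      · linarith [hx, hmono, hy]
      · linarith [hx, hmono, hy]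
    · intro hodd
      have hd : Even d := by
        obtain ⟨t, ht⟩ := hodd
        exact ⟨t, by omega⟩
      obtain ⟨h1, h2⟩ := ihe hd
      rw [key, hd.neg_one_pow]
      push_cast
      have hx : 1 / ((p : ℝ) + ((d : ℝ) + 1) + 1) = 1 / ((p : ℝ) + (d : ℝ) + 2) := by
        rw [show (p : ℝ) + ((d : ℝ) + 1) + 1 = (p : ℝ) + (d : ℝ) + 2 from by ring]
      have hy : (-1 : ℝ) / ((p : ℝ) + (d : ℝ) + 1) = -(1 / ((p : ℝ) + (d : ℝ) + 1)) := by ring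
      constructor
      · linarith [hx, hmono, hy]
      · linarith [hx, hmono, hy]

lemma altS_bound (p q : ℕ) (h : p ≤ q) : |altS q - altS p| ≤ 1 / ((p : ℝ) + 1) := by
  obtain ⟨d, rfl⟩ := Nat.exists_eq_add_of_le h
  have hpd : (0 : ℝ) < (p : ℝ) + d + 1 := by positivity
  have habs : |altS (p + d) - altS p| = |(-1 : ℝ) ^ (p + 1) * (altS (p + d) - altS p)| := by
    rw [abs_mul, abs_pow, abs_neg, abs_one, one_pow, one_mul]
  rw [habs]
  obtain ⟨ihe, iho⟩ := altS_invariant p d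
  rcases Nat.even_or_odd d with hd | hd
  · obtain ⟨h1, h2⟩ := ihe hd
    rw [abs_of_nonneg h1]
    have : 0 < 1 / ((p : ℝ) + d + 1) := by positivity
    linarith
  · obtain ⟨h1, h2⟩ := iho hd
    rw [abs_of_nonneg (le_trans (by positivity) h1)]
    exact h2

lemma lemC (a : ℕ) : ∀ N : ℕ,
    ∑ b ∈ Finset.range N, (-1 : ℝ) ^ b / ((b : ℝ) + a + 1) = (-1) ^ a * (altS a - altS (N + a))
  | 0 => by simp
  | (N + 1) => by
    rw [Finset.sum_range_succ, lemC a N, show N + 1 + a = (N + a) + 1 from by ring, altS_succ]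
    have hpow : (-1 : ℝ) ^ (N + a + 1) = -((-1) ^ N * (-1) ^ a) := by
      rw [pow_succ, pow_add]; ring
    have hsq : (-1 : ℝ) ^ a * (-1) ^ a = 1 := by
      rw [← pow_add]; exact Even.neg_one_pow ⟨a, rfl⟩
    rw [hpow]
    have h1 : ((N : ℝ) + a + 1) ≠ 0 := by positivity
    push_cast
    field_simp
    linear_combination (-(-1 : ℝ) ^ N) * hsq

lemma lemA (a : ℕ) : ∀ t : ℕ,
    ∑ b ∈ Finset.range (a + 1 + t), (-1 : ℝ) ^ b / ((b : ℝ) - a) = (-1) ^ a * (altS t - altS a)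
  | 0 => by
    rw [Finset.sum_range_succ]
    have h0 : ((a : ℝ) - a) = 0 := by ring
    rw [h0, div_zero, add_zero, ← Finset.sum_range_reflect]
    have key : ∀ c ∈ Finset.range a,
        (-1 : ℝ) ^ (a - 1 - c) / ((↑(a - 1 - c) : ℝ) - a)
          = -((-1) ^ a * ((-1) ^ (c + 1) / (c + 1))) := by
      intro c hc
      rw [Finset.mem_range] at hc
      have hcast : ((a - 1 - c : ℕ) : ℝ) = (a : ℝ) - 1 - c := by
        have h := congrArg (fun n : ℕ => (n : ℝ)) (show a - 1 - c + (c + 1) = a from by omega)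
        push_cast at h
        linarith
      have h2 : ((-1 : ℝ)) ^ (c + 1) * (-1) ^ (c + 1) = 1 := by
        rw [← pow_add]; exact Even.neg_one_pow ⟨c + 1, rfl⟩
      have hpow : (-1 : ℝ) ^ (a - 1 - c) * (-1) ^ (c + 1) = (-1) ^ a := by
        rw [← pow_add, show a - 1 - c + (c + 1) = a from by omega]
      have hpow' : (-1 : ℝ) ^ (a - 1 - c) = (-1) ^ a * (-1) ^ (c + 1) := by
        calc (-1 : ℝ) ^ (a - 1 - c)
            = (-1) ^ (a - 1 - c) * ((-1) ^ (c + 1) * (-1) ^ (c + 1)) := by rw [h2, mul_one]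
          _ = ((-1) ^ (a - 1 - c) * (-1) ^ (c + 1)) * (-1) ^ (c + 1) := by ring
          _ = (-1) ^ a * (-1) ^ (c + 1) := by rw [hpow]
      rw [hcast, hpow', show (a : ℝ) - 1 - c - a = -((c : ℝ) + 1) from by ring, div_neg]
      have hc1 : ((c : ℝ) + 1) ≠ 0 := by positivity
      field_simp
    rw [Finset.sum_congr rfl key]
    simp only [Finset.sum_neg_distrib, ← Finset.mul_sum]
    simp [altS]
  | (t + 1) => by
    rw [show a + 1 + (t + 1) = (a + 1 + t) + 1 from by ring, Finset.sum_range_succ,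
      lemA a t, altS_succ]
    have hcast : ((a + 1 + t : ℕ) : ℝ) - a = (t : ℝ) + 1 := by push_cast; ring
    rw [hcast]
    have hpow : (-1 : ℝ) ^ (a + 1 + t) = (-1) ^ a * (-1) ^ (t + 1) := by
      rw [← pow_add]; congr 1; omega
    rw [hpow]
    have ht1 : ((t : ℝ) + 1) ≠ 0 := by positivity
    field_simp
    ring

lemma my_inner_sum (a N : ℕ) (haN : a < N) :
    ∑ b ∈ Finset.range N, (-1 : ℝ) ^ b * (2 * b + 1) / ((2 * (b : ℝ) + 1) ^ 2 - (2 * (a : ℝ) + 1) ^ 2)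
      = (-1) ^ a / 4 * (altS (N - 1 - a) - altS (N + a) - 1 / (2 * a + 1)) := by
  have key : ∀ b ∈ Finset.range N,
      (-1 : ℝ) ^ b * (2 * b + 1) / ((2 * (b : ℝ) + 1) ^ 2 - (2 * (a : ℝ) + 1) ^ 2)
        = 1 / 4 * ((-1) ^ b / ((b : ℝ) - a)) + 1 / 4 * ((-1) ^ b / ((b : ℝ) + a + 1))
          - (if b = a then (-1 : ℝ) ^ a / (4 * (2 * a + 1)) else 0) := by
    intro b _
    by_cases hba : b = a
    · subst hba
      have h1 : ((b : ℝ) - b) = 0 := by ring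
      have h2 : ((2 * (b : ℝ) + 1) ^ 2 - (2 * (b : ℝ) + 1) ^ 2) = 0 := by ring
      rw [h1, h2, div_zero, div_zero, if_pos rfl]
      have hb1 : (2 * (b : ℝ) + 1) ≠ 0 := by positivity
      field_simp
      ring
    · rw [if_neg hba]
      have hc : ((b : ℝ) - a) ≠ 0 := by
        have : (b : ℝ) ≠ a := by exact_mod_cast hba
        exact sub_ne_zero.mpr this
      have hd : ((b : ℝ) + a + 1) ≠ 0 := by positivity
      have he : ((2 * (b : ℝ) + 1) ^ 2 - (2 * (a : ℝ) + 1) ^ 2) ≠ 0 := by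
        have : (2 * (b : ℝ) + 1) ^ 2 - (2 * (a : ℝ) + 1) ^ 2 = 4 * (((b:ℝ) - a) * ((b:ℝ) + a + 1)) := by ring
        rw [this]
        positivity
      field_simp
      ring
  rw [Finset.sum_congr rfl key]
  rw [Finset.sum_sub_distrib, Finset.sum_ite_eq' (Finset.range N) a
    (fun _ => (-1 : ℝ) ^ a / (4 * (2 * a + 1))), if_pos (Finset.mem_range.mpr haN)]
  rw [Finset.sum_add_distrib, ← Finset.mul_sum, ← Finset.mul_sum]
  rw [lemC a N]
  have hN : N = a + 1 + (N - 1 - a) := by omega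
  rw [show (Finset.range N) = Finset.range (a + 1 + (N - 1 - a)) from by rw [← hN],
    lemA a (N - 1 - a)]
  have h1 : (2 * (a : ℝ) + 1) ≠ 0 := by positivity
  field_simp
  ring

lemma step_alg (X Y P Q : ℝ) (hX : X ≠ 0) (hY : Y ≠ 0) (hP : P ≠ 0) (hQ : Q ≠ 0)
    (hYX : Y ^ 2 - X ^ 2 ≠ 0) :
    X * Y * (1 / P - 1 / Q) / (Y ^ 2 - X ^ 2) * (1 / Y ^ 2) + 1 / (P * X) * (1 / Y)
      = X * Y * (1 / (P * X ^ 2) - 1 / (Q * Y ^ 2)) / (Y ^ 2 - X ^ 2) := by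
  field_simp
  ring

lemma geom_id {X Y : ℝ} (hX : 0 < X) (hY : 0 < Y) (hne : X ≠ Y) : ∀ m : ℕ,
    ∑ k ∈ Finset.range (m + 1), 1 / X ^ (2 * k + 1) * (1 / Y ^ (2 * (m - k) + 1))
      = X * Y * (1 / X ^ (2 * m + 2) - 1 / Y ^ (2 * m + 2)) / (Y ^ 2 - X ^ 2)
  | 0 => by
    have hYX : Y ^ 2 - X ^ 2 ≠ 0 := by intro h; apply hne; nlinarith
    have hXne : X ≠ 0 := ne_of_gt hX
    have hYne : Y ≠ 0 := ne_of_gt hY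
    rw [Finset.sum_range_one]
    norm_num
    field_simp
  | (m + 1) => by
    have hYX : Y ^ 2 - X ^ 2 ≠ 0 := by intro h; apply hne; nlinarith
    have hXne : X ≠ 0 := ne_of_gt hX
    have hYne : Y ≠ 0 := ne_of_gt hY
    rw [Finset.sum_range_succ]
    have key : ∀ k ∈ Finset.range (m + 1),
        1 / X ^ (2 * k + 1) * (1 / Y ^ (2 * (m + 1 - k) + 1))
          = 1 / X ^ (2 * k + 1) * (1 / Y ^ (2 * (m - k) + 1)) * (1 / Y ^ 2) := by
      intro k hk
      rw [Finset.mem_range] at hk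
      have h : 2 * (m + 1 - k) + 1 = (2 * (m - k) + 1) + 2 := by omega
      rw [h, pow_add]
      ring
    rw [Finset.sum_congr rfl key, ← Finset.sum_mul, geom_id hX hY hne m]
    have h1 : 2 * (m + 1) + 1 = (2 * m + 2) + 1 := by ring
    have h2 : 2 * (m + 1) + 2 = (2 * m + 2) + 2 := by ring
    have h3 : m + 1 - (m + 1) = 0 := Nat.sub_self _
    rw [h1, h2, h3, pow_add, pow_add, pow_add]
    simp only [mul_zero, zero_add, pow_one]
    have hPne : X ^ (2 * m + 2) ≠ 0 := pow_ne_zero _ hXne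
    have hQne : Y ^ (2 * m + 2) ≠ 0 := pow_ne_zero _ hYne
    linear_combination step_alg X Y (X ^ (2 * m + 2)) (Y ^ (2 * m + 2)) hXne hYne hPne hQne hYX

lemma conv_inner (m a b : ℕ) :
    ∑ k ∈ Finset.range (m + 1),
      ((-1 : ℝ) ^ a / (2 * (a : ℝ) + 1) ^ (2 * k + 1)) * ((-1) ^ b / (2 * (b : ℝ) + 1) ^ (2 * (m - k) + 1))
      = (if a = b then ((m : ℝ) + 1) * (1 / (2 * (a : ℝ) + 1) ^ (2 * m + 2)) else 0)
        + (-1) ^ a * (-1) ^ b *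
          ((2 * (a : ℝ) + 1) * (2 * (b : ℝ) + 1) *
            (1 / (2 * (a : ℝ) + 1) ^ (2 * m + 2) - 1 / (2 * (b : ℝ) + 1) ^ (2 * m + 2)) /
            ((2 * (b : ℝ) + 1) ^ 2 - (2 * (a : ℝ) + 1) ^ 2)) := by
  by_cases hab : a = b
  · subst hab
    rw [if_pos rfl, sub_self, mul_zero, zero_div, mul_zero, add_zero]
    have key : ∀ k ∈ Finset.range (m + 1),
        ((-1 : ℝ) ^ a / (2 * (a : ℝ) + 1) ^ (2 * k + 1)) * ((-1) ^ a / (2 * (a : ℝ) + 1) ^ (2 * (m - k) + 1))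
          = 1 / (2 * (a : ℝ) + 1) ^ (2 * m + 2) := by
      intro k hk
      rw [Finset.mem_range] at hk
      rw [div_mul_div_comm, ← pow_add (2 * (a : ℝ) + 1),
        show (2 * k + 1) + (2 * (m - k) + 1) = 2 * m + 2 from by omega,
        ← pow_add (-1 : ℝ), Even.neg_one_pow (⟨a, rfl⟩ : Even (a + a))]
    rw [Finset.sum_congr rfl key, Finset.sum_const, Finset.card_range, nsmul_eq_mul]
    push_cast
    ring
  · rw [if_neg hab, zero_add]
    have hX : (0 : ℝ) < 2 * (a : ℝ) + 1 := by positivity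
    have hY : (0 : ℝ) < 2 * (b : ℝ) + 1 := by positivity
    have hne : (2 * (a : ℝ) + 1) ≠ (2 * (b : ℝ) + 1) := by
      intro h
      apply hab
      have : (a : ℝ) = b := by linarith
      exact_mod_cast this
    have key : ∀ k ∈ Finset.range (m + 1),
        ((-1 : ℝ) ^ a / (2 * (a : ℝ) + 1) ^ (2 * k + 1)) * ((-1) ^ b / (2 * (b : ℝ) + 1) ^ (2 * (m - k) + 1))
          = (-1) ^ a * (-1) ^ b *
            (1 / (2 * (a : ℝ) + 1) ^ (2 * k + 1) * (1 / (2 * (b : ℝ) + 1) ^ (2 * (m - k) + 1))) := by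
      intro k _
      ring
    rw [Finset.sum_congr rfl key, ← Finset.mul_sum, geom_id hX hY hne m]

/-- `W1 a b` : the "first half" off-diagonal term. -/
noncomputable def W1 (m a b : ℕ) : ℝ :=
  ((-1) ^ a * (2 * (a : ℝ) + 1) * (1 / (2 * (a : ℝ) + 1) ^ (2 * m + 2))) *
    ((-1) ^ b * (2 * (b : ℝ) + 1) / ((2 * (b : ℝ) + 1) ^ 2 - (2 * (a : ℝ) + 1) ^ 2))

lemma W_split (m a b : ℕ) :
    (-1 : ℝ) ^ a * (-1) ^ b *
      ((2 * (a : ℝ) + 1) * (2 * (b : ℝ) + 1) *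
        (1 / (2 * (a : ℝ) + 1) ^ (2 * m + 2) - 1 / (2 * (b : ℝ) + 1) ^ (2 * m + 2)) /
        ((2 * (b : ℝ) + 1) ^ 2 - (2 * (a : ℝ) + 1) ^ 2))
      = W1 m a b + W1 m b a := by
  unfold W1
  by_cases h : ((2 * (b : ℝ) + 1) ^ 2 - (2 * (a : ℝ) + 1) ^ 2) = 0
  · have h' : ((2 * (a : ℝ) + 1) ^ 2 - (2 * (b : ℝ) + 1) ^ 2) = 0 := by linarith
    rw [h, h', div_zero, div_zero, div_zero, mul_zero, mul_zero, mul_zero, add_zero]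
  · have h' : ((2 * (a : ℝ) + 1) ^ 2 - (2 * (b : ℝ) + 1) ^ 2) ≠ 0 := fun hc => h (by linarith)
    have hP : ((2 * (a : ℝ) + 1) ^ (2 * m + 2)) ≠ 0 := by positivity
    have hQ : ((2 * (b : ℝ) + 1) ^ (2 * m + 2)) ≠ 0 := by positivity
    field_simp
    ring

lemma finite_id (m N : ℕ) :
    ∑ k ∈ Finset.range (m + 1),
      (∑ n ∈ Finset.range N, (-1 : ℝ) ^ n / (2 * (n : ℝ) + 1) ^ (2 * k + 1)) *
        (∑ n ∈ Finset.range N, (-1 : ℝ) ^ n / (2 * (n : ℝ) + 1) ^ (2 * (m - k) + 1))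
      = ((m : ℝ) + 1 / 2) * (∑ a ∈ Finset.range N, 1 / (2 * (a : ℝ) + 1) ^ (2 * m + 2))
        + 1 / 2 * ∑ a ∈ Finset.range N,
            (1 / (2 * (a : ℝ) + 1) ^ (2 * m + 1)) * (altS (N - 1 - a) - altS (N + a)) := by
  have step1 : ∀ k ∈ Finset.range (m + 1),
      (∑ n ∈ Finset.range N, (-1 : ℝ) ^ n / (2 * (n : ℝ) + 1) ^ (2 * k + 1)) *
        (∑ n ∈ Finset.range N, (-1 : ℝ) ^ n / (2 * (n : ℝ) + 1) ^ (2 * (m - k) + 1))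
      = ∑ a ∈ Finset.range N, ∑ b ∈ Finset.range N,
          ((-1 : ℝ) ^ a / (2 * (a : ℝ) + 1) ^ (2 * k + 1)) * ((-1) ^ b / (2 * (b : ℝ) + 1) ^ (2 * (m - k) + 1)) := by
    intro k _
    rw [Finset.sum_mul_sum]
  rw [Finset.sum_congr rfl step1, Finset.sum_comm]
  have step2 : ∀ a ∈ Finset.range N,
      (∑ k ∈ Finset.range (m + 1), ∑ b ∈ Finset.range N,
        ((-1 : ℝ) ^ a / (2 * (a : ℝ) + 1) ^ (2 * k + 1)) * ((-1) ^ b / (2 * (b : ℝ) + 1) ^ (2 * (m - k) + 1)))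
      = ((m : ℝ) + 1) * (1 / (2 * (a : ℝ) + 1) ^ (2 * m + 2))
        + ∑ b ∈ Finset.range N, (W1 m a b + W1 m b a) := by
    intro a ha
    rw [Finset.sum_comm]
    have : ∀ b ∈ Finset.range N,
        (∑ k ∈ Finset.range (m + 1),
          ((-1 : ℝ) ^ a / (2 * (a : ℝ) + 1) ^ (2 * k + 1)) * ((-1) ^ b / (2 * (b : ℝ) + 1) ^ (2 * (m - k) + 1)))
        = (if a = b then ((m : ℝ) + 1) * (1 / (2 * (a : ℝ) + 1) ^ (2 * m + 2)) else 0)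
          + (W1 m a b + W1 m b a) := by
      intro b _
      rw [conv_inner m a b, W_split m a b]
    rw [Finset.sum_congr rfl this, Finset.sum_add_distrib, Finset.sum_ite_eq, if_pos ha]
  rw [Finset.sum_congr rfl step2, Finset.sum_add_distrib, ← Finset.mul_sum]
  have step3 : ∑ a ∈ Finset.range N, ∑ b ∈ Finset.range N, (W1 m a b + W1 m b a)
      = 2 * ∑ a ∈ Finset.range N, ∑ b ∈ Finset.range N, W1 m a b := by
    simp only [Finset.sum_add_distrib]
    rw [two_mul]
    congr 1
    exact Finset.sum_comm
  rw [step3]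
  have step4 : ∀ a ∈ Finset.range N,
      ∑ b ∈ Finset.range N, W1 m a b
        = 1 / 4 * ((1 / (2 * (a : ℝ) + 1) ^ (2 * m + 1)) * (altS (N - 1 - a) - altS (N + a)))
          - 1 / 4 * (1 / (2 * (a : ℝ) + 1) ^ (2 * m + 2)) := by
    intro a ha
    unfold W1
    rw [← Finset.mul_sum, my_inner_sum a N (Finset.mem_range.mp ha)]
    have hX : (2 * (a : ℝ) + 1) ≠ 0 := by positivity
    have hP : ((2 * (a : ℝ) + 1) ^ (2 * m + 1)) ≠ 0 := by positivity
    rw [show 2 * m + 2 = (2 * m + 1) + 1 from rfl, pow_succ]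
    rcases Nat.even_or_odd a with h | h
    · rw [h.neg_one_pow]
      field_simp
    · rw [h.neg_one_pow]
      field_simp
  rw [Finset.sum_congr rfl step4, Finset.sum_sub_distrib, ← Finset.mul_sum, ← Finset.mul_sum]
  ring

lemma summable_odd_pow {j : ℕ} (hj : 2 ≤ j) : Summable (fun n : ℕ => 1 / (2 * (n : ℝ) + 1) ^ j) := by
  have hbase : Summable (fun n : ℕ => 1 / ((n : ℝ) + 1) ^ 2) := by
    have h2 : Summable (fun n : ℕ => 1 / (n : ℝ) ^ 2) :=
      Real.summable_one_div_nat_pow.mpr one_lt_two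
    have := (summable_nat_add_iff 1).mpr h2
    refine this.congr fun n => ?_
    push_cast
    ring
  refine Summable.of_nonneg_of_le (fun n => by positivity) (fun n => ?_) hbase
  apply one_div_le_one_div_of_le (by positivity)
  calc ((n : ℝ) + 1) ^ 2 ≤ (2 * (n : ℝ) + 1) ^ 2 := by
        apply pow_le_pow_left₀ (by positivity)
        · linarith [Nat.cast_nonneg (α := ℝ) n]
    _ ≤ (2 * (n : ℝ) + 1) ^ j := by
        apply pow_le_pow_right₀ (by linarith [Nat.cast_nonneg (α := ℝ) n]) hj

lemma tendsto_D {j : ℕ} (hj : 2 ≤ j) :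
    Tendsto (fun N : ℕ => ∑ a ∈ Finset.range N, 1 / (2 * (a : ℝ) + 1) ^ j) atTop
      (nhds (∑' n : ℕ, 1 / (2 * (n : ℝ) + 1) ^ j)) :=
  (summable_odd_pow hj).hasSum.tendsto_sum_nat

lemma harmonic_sum_eq (N : ℕ) : ∑ a ∈ Finset.range N, 1 / ((a : ℝ) + 1) = (harmonic N : ℝ) := by
  rw [harmonic]
  push_cast
  simp [one_div]

lemma R_pointwise (m a N : ℕ) (ha : a < N) :
    |1 / (2 * (a : ℝ) + 1) ^ (2 * m + 1) * (altS (N - 1 - a) - altS (N + a))|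
      ≤ 2 / (2 * (N : ℝ) + 1) * (1 / (2 * (a : ℝ) + 1) + 1 / (2 * ((N : ℝ) - (a : ℝ)))) := by
  have hNa : (1 : ℝ) ≤ (N : ℝ) - (a : ℝ) := by
    have : (a : ℝ) + 1 ≤ N := by exact_mod_cast Nat.succ_le_of_lt ha
    linarith
  have ha0 : (0 : ℝ) < 2 * (a : ℝ) + 1 := by positivity
  have hcast : ((N - 1 - a : ℕ) : ℝ) + 1 = (N : ℝ) - (a : ℝ) := by
    have h := congrArg (fun n : ℕ => (n : ℝ)) (show N - 1 - a + (a + 1) = N from by omega)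
    push_cast at h
    linarith
  rw [abs_mul]
  have h1 : |1 / (2 * (a : ℝ) + 1) ^ (2 * m + 1)| ≤ 1 / (2 * (a : ℝ) + 1) := by
    rw [abs_of_nonneg (by positivity)]
    apply one_div_le_one_div_of_le ha0
    calc 2 * (a : ℝ) + 1 = (2 * (a : ℝ) + 1) ^ 1 := (pow_one _).symm
      _ ≤ (2 * (a : ℝ) + 1) ^ (2 * m + 1) := pow_le_pow_right₀ (by linarith) (by omega)
  have h2 : |altS (N - 1 - a) - altS (N + a)| ≤ 1 / ((N : ℝ) - (a : ℝ)) := by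
    rw [abs_sub_comm, ← hcast]
    exact altS_bound (N - 1 - a) (N + a) (by omega)
  calc |1 / (2 * (a : ℝ) + 1) ^ (2 * m + 1)| * |altS (N - 1 - a) - altS (N + a)|
      ≤ (1 / (2 * (a : ℝ) + 1)) * (1 / ((N : ℝ) - (a : ℝ))) := by
        apply mul_le_mul h1 h2 (abs_nonneg _) (by positivity)
    _ = 2 / (2 * (N : ℝ) + 1) * (1 / (2 * (a : ℝ) + 1) + 1 / (2 * ((N : ℝ) - (a : ℝ)))) := by
        have hN0 : (0 : ℝ) < 2 * (N : ℝ) + 1 := by positivity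
        have hNa0 : (0 : ℝ) < (N : ℝ) - (a : ℝ) := by linarith
        field_simp
        ring

lemma reflect_sum (N : ℕ) :
    ∑ a ∈ Finset.range N, 1 / (2 * ((N : ℝ) - (a : ℝ))) = ∑ a ∈ Finset.range N, 1 / (2 * ((a : ℝ) + 1)) := by
  rw [← Finset.sum_range_reflect (fun a => 1 / (2 * ((a : ℝ) + 1))) N]
  apply Finset.sum_congr rfl
  intro j hj
  rw [Finset.mem_range] at hj
  congr 1
  have h := congrArg (fun n : ℕ => (n : ℝ)) (show N - 1 - j + (j + 1) = N from by omega)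
  push_cast at h
  ring_nf
  nlinarith [h]

lemma R_tendsto_zero (m : ℕ) :
    Tendsto (fun N : ℕ => ∑ a ∈ Finset.range N,
        (1 / (2 * (a : ℝ) + 1) ^ (2 * m + 1)) * (altS (N - 1 - a) - altS (N + a)))
      atTop (nhds 0) := by
  have hg : Tendsto (fun x : ℝ => (4 + 4 * Real.log x) / (2 * x + 1)) atTop (nhds 0) := by
    have t1 : Tendsto (fun x : ℝ => Real.log x / (2 * x + 1)) atTop (nhds 0) := by
      simpa using Real.tendsto_pow_log_div_mul_add_atTop 2 1 1 two_ne_zero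
    have t2 : Tendsto (fun x : ℝ => 1 / (2 * x + 1)) atTop (nhds 0) := by
      have h2x : Tendsto (fun x : ℝ => 2 * x + 1) atTop atTop :=
        tendsto_atTop_add_const_right _ 1 (tendsto_id.const_mul_atTop two_pos)
      simpa [one_div, Pi.inv_def] using h2x.inv_tendsto_atTop
    have := (t2.const_mul 4).add (t1.const_mul 4)
    simp only [mul_zero, add_zero] at this
    refine this.congr fun x => ?_
    ring
  have hgN : Tendsto (fun N : ℕ => (4 + 4 * Real.log N) / (2 * (N : ℝ) + 1)) atTop (nhds 0) :=
    hg.comp tendsto_natCast_atTop_atTop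
  apply squeeze_zero_norm _ hgN
  intro N
  have hN0 : (0 : ℝ) ≤ 2 / (2 * (N : ℝ) + 1) := by positivity
  calc ‖∑ a ∈ Finset.range N, (1 / (2 * (a : ℝ) + 1) ^ (2 * m + 1)) * (altS (N - 1 - a) - altS (N + a))‖
      ≤ ∑ a ∈ Finset.range N, |(1 / (2 * (a : ℝ) + 1) ^ (2 * m + 1)) * (altS (N - 1 - a) - altS (N + a))| :=
        Finset.abs_sum_le_sum_abs _ _
    _ ≤ ∑ a ∈ Finset.range N, 2 / (2 * (N : ℝ) + 1) * (1 / (2 * (a : ℝ) + 1) + 1 / (2 * ((N : ℝ) - (a : ℝ)))) := by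
        apply Finset.sum_le_sum
        intro a ha
        exact R_pointwise m a N (Finset.mem_range.mp ha)
    _ = 2 / (2 * (N : ℝ) + 1) * ((∑ a ∈ Finset.range N, 1 / (2 * (a : ℝ) + 1))
          + ∑ a ∈ Finset.range N, 1 / (2 * ((a : ℝ) + 1))) := by
        rw [← Finset.mul_sum, Finset.sum_add_distrib, reflect_sum]
    _ ≤ 2 / (2 * (N : ℝ) + 1) * ((harmonic N : ℝ) + (harmonic N : ℝ)) := by
        apply mul_le_mul_of_nonneg_left _ hN0
        rw [← harmonic_sum_eq]
        apply add_le_add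
        · apply Finset.sum_le_sum
          intro a _
          apply one_div_le_one_div_of_le (by positivity)
          push_cast
          linarith [Nat.cast_nonneg (α := ℝ) a]
        · apply Finset.sum_le_sum
          intro a _
          apply one_div_le_one_div_of_le (by positivity)
          linarith [Nat.cast_nonneg (α := ℝ) a]
    _ ≤ (4 + 4 * Real.log N) / (2 * (N : ℝ) + 1) := by
        have hlog := harmonic_le_one_add_log N
        have hh : (0 : ℝ) ≤ (harmonic N : ℝ) := by
          rw [← harmonic_sum_eq]
          positivity
        rw [div_mul_eq_mul_div, div_le_div_iff₀ (by positivity) (by positivity)]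
        nlinarith [hlog, hh, show (0 : ℝ) < 2 * (N : ℝ) + 1 from by positivity]

/-- Williams' convolution identity: `∑_{k=0}^m β(2k+1) β(2m-2k+1) = (m + 1/2) λ(2m+2)`,
where `β j` denotes the value `β(2j+1) = ∑_{n=0}^∞ (-1)^n/(2n+1)^{2j+1}` of the Dirichlet
beta function, given as the limit of the partial sums of the (possibly only conditionally
convergent) alternating series. -/
theorem beta_convolution (m : ℕ) (β : ℕ → ℝ)
    (hβ : ∀ j : ℕ, Filter.Tendsto
      (fun N : ℕ => ∑ n ∈ Finset.range N, (-1 : ℝ) ^ n / (2 * (n : ℝ) + 1) ^ (2 * j + 1))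
      Filter.atTop (nhds (β j))) :
    ∑ k ∈ Finset.range (m + 1), β k * β (m - k) =
      ((m : ℝ) + 1 / 2) * dirichletLambda (2 * m + 2) := by
  have hT : Filter.Tendsto
      (fun N : ℕ => ∑ k ∈ Finset.range (m + 1),
        (∑ n ∈ Finset.range N, (-1 : ℝ) ^ n / (2 * (n : ℝ) + 1) ^ (2 * k + 1)) *
          (∑ n ∈ Finset.range N, (-1 : ℝ) ^ n / (2 * (n : ℝ) + 1) ^ (2 * (m - k) + 1)))
      Filter.atTop (nhds (∑ k ∈ Finset.range (m + 1), β k * β (m - k))) :=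
    tendsto_finset_sum _ (fun k _ => (hβ k).mul (hβ (m - k)))
  have hT' : Filter.Tendsto
      (fun N : ℕ => ((m : ℝ) + 1 / 2) * (∑ a ∈ Finset.range N, 1 / (2 * (a : ℝ) + 1) ^ (2 * m + 2))
        + 1 / 2 * ∑ a ∈ Finset.range N,
            (1 / (2 * (a : ℝ) + 1) ^ (2 * m + 1)) * (altS (N - 1 - a) - altS (N + a)))
      Filter.atTop (nhds (((m : ℝ) + 1 / 2) * dirichletLambda (2 * m + 2) + 1 / 2 * 0)) := by
    apply Filter.Tendsto.add
    · exact (tendsto_D (by omega)).const_mul _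
    · exact (R_tendsto_zero m).const_mul _
  have heq : (fun N : ℕ => ∑ k ∈ Finset.range (m + 1),
      (∑ n ∈ Finset.range N, (-1 : ℝ) ^ n / (2 * (n : ℝ) + 1) ^ (2 * k + 1)) *
        (∑ n ∈ Finset.range N, (-1 : ℝ) ^ n / (2 * (n : ℝ) + 1) ^ (2 * (m - k) + 1)))
      = (fun N : ℕ => ((m : ℝ) + 1 / 2) * (∑ a ∈ Finset.range N, 1 / (2 * (a : ℝ) + 1) ^ (2 * m + 2))
        + 1 / 2 * ∑ a ∈ Finset.range N,
            (1 / (2 * (a : ℝ) + 1) ^ (2 * m + 1)) * (altS (N - 1 - a) - altS (N + a))) := by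
    funext N
    exact finite_id m N
  rw [heq] at hT
  have := tendsto_nhds_unique hT hT'
  rw [this, mul_zero, add_zero]
end

section
/- Let m be a positive integer. Then Σ_{k=0}^{m} 2^{-2k} · ζ(2k) · λ(2m-2k+2) = 0, where ζ is the Riemann zeta function (so in particular ζ(0) = -1/2 and, for k ≥ 1, ζ(2k) = Σ_{n=1}^∞ 1/n^{2k}). -/
open Real Finset

section aux

open PowerSeries

lemma exp_sub_one_ne : (exp ℚ - 1) ≠ 0 := by
  intro h
  have := congrArg (coeff 1) h
  simp [coeff_exp] at this

lemma key_ps : (rescale (2:ℚ) (bernoulliPowerSeries ℚ)) * (2 * bernoulliPowerSeries ℚ + X) =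
    2 * (bernoulliPowerSeries ℚ)^2 := by
  set B := bernoulliPowerSeries ℚ with hBdef
  set F := rescale (2:ℚ) B with hFdef
  have hB : B * (exp ℚ - 1) = X := bernoulliPowerSeries_mul_exp_sub_one ℚ
  have h1 : (exp ℚ - 1) * (2 * B + X) = X * (exp ℚ + 1) := by
    have : (exp ℚ - 1) * (2 * B) = 2 * X := by rw [mul_comm (exp ℚ - 1), mul_assoc, hB]
    ring_nf
    ring_nf at this
    linear_combination this
  have h2 : F * ((exp ℚ - 1) * (exp ℚ + 1)) = 2 * X := by
    have : F * (rescale (2:ℚ) (exp ℚ) - 1) = rescale (2:ℚ) X := by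
      rw [hFdef, ← map_one (rescale (2:ℚ)), ← map_sub, ← map_mul, hB]
    rw [show (2:ℚ) = ((2:ℕ):ℚ) by norm_num, ← exp_pow_eq_rescale_exp, rescale_X] at this
    have hsq : exp ℚ ^ 2 - 1 = (exp ℚ - 1) * (exp ℚ + 1) := by ring
    rw [hsq] at this
    rw [this]
    norm_num [map_ofNat]
  have h3 : (exp ℚ - 1)^2 * (F * (2 * B + X)) = (exp ℚ - 1)^2 * (2 * B^2) := by
    calc (exp ℚ - 1)^2 * (F * (2 * B + X))
        = F * ((exp ℚ - 1) * ((exp ℚ - 1) * (2 * B + X))) := by ring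
      _ = F * ((exp ℚ - 1) * (X * (exp ℚ + 1))) := by rw [h1]
      _ = (F * ((exp ℚ - 1) * (exp ℚ + 1))) * X := by ring
      _ = 2 * X * X := by rw [h2]
      _ = 2 * (B * (exp ℚ - 1)) * (B * (exp ℚ - 1)) := by rw [hB]
      _ = (exp ℚ - 1)^2 * (2 * B^2) := by ring
  exact mul_left_cancel₀ (pow_ne_zero 2 exp_sub_one_ne) h3

noncomputable def qb (n : ℕ) : ℚ := bernoulli n / (Nat.factorial n)

lemma qb_odd {n : ℕ} (h : Odd n) (h1 : n ≠ 1) : qb n = 0 := by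
  have : bernoulli n = 0 := by
    rw [bernoulli_eq_bernoulli'_of_ne_one h1]
    exact bernoulli'_eq_zero_of_odd h (by rcases h with ⟨k,rfl⟩; omega)
  simp [qb, this]

lemma coeff_B (n : ℕ) : coeff n (bernoulliPowerSeries ℚ) = qb n := by
  simp [bernoulliPowerSeries, qb]

lemma coeff_E (n : ℕ) :
    coeff n (2 * bernoulliPowerSeries ℚ + X) = 2 * qb n + (if n = 1 then 1 else 0) := by
  rw [map_add, show (2 : ℚ⟦X⟧) = C 2 by norm_num [map_ofNat], coeff_C_mul, coeff_B, coeff_X]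

lemma coeff_E_odd {n : ℕ} (h : Odd n) :
    coeff n (2 * bernoulliPowerSeries ℚ + X) = 0 := by
  rw [coeff_E]
  rcases eq_or_ne n 1 with rfl | h1
  · norm_num [qb, bernoulli_one]
  · rw [qb_odd h h1]; simp [h1]

lemma coeff_F (n : ℕ) :
    coeff n (2 * rescale (2:ℚ) (bernoulliPowerSeries ℚ) + 2 * X) =
      2 * (2 ^ n * qb n) + 2 * (if n = 1 then 1 else 0) := by
  rw [map_add, show (2 : ℚ⟦X⟧) = C 2 by norm_num [map_ofNat], coeff_C_mul, coeff_C_mul,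
    coeff_rescale, coeff_B, coeff_X]

lemma sum_even_vanish (f : ℕ → ℚ) (hf : ∀ j, f (2*j+1) = 0) (n : ℕ) :
    ∑ i ∈ range (2*n+1), f i = ∑ j ∈ range (n+1), f (2*j) := by
  induction n with
  | zero => simp
  | succ n ih =>
      have h2 : 2*(n+1)+1 = (2*n+1) + 1 + 1 := by ring
      rw [h2, sum_range_succ, sum_range_succ, ih, sum_range_succ]
      have : 2*n+1+1 = 2*(n+1) := by ring
      rw [hf n, this, sum_range_succ, sum_range_succ]
      ring

lemma key2 : (2 * bernoulliPowerSeries ℚ + X) *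
      (2 * rescale (2:ℚ) (bernoulliPowerSeries ℚ) + 2 * X) =
    (2 * bernoulliPowerSeries ℚ + X)^2 + X^2 := by
  linear_combination 2 * key_ps

lemma keyQ (m : ℕ) (hm : 0 < m) :
    ∑ k ∈ range (m+2), (4:ℚ)^(m+1-k) * (qb (2*k) * qb (2*(m+1-k))) =
    ∑ k ∈ range (m+2), qb (2*k) * qb (2*(m+1-k)) := by
  have h := congrArg (coeff (2*m+2)) key2
  rw [map_add, coeff_mul, sq, coeff_mul, Finset.Nat.sum_antidiagonal_eq_sum_range_succ_mk,
    Finset.Nat.sum_antidiagonal_eq_sum_range_succ_mk, coeff_X_pow] at h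
  rw [if_neg (by omega)] at h
  have hL : ∑ k ∈ range (2*m+2+1),
      coeff k (2 * bernoulliPowerSeries ℚ + X) *
        coeff (2*m+2-k) (2 * rescale (2:ℚ) (bernoulliPowerSeries ℚ) + 2 * X) =
      ∑ j ∈ range (m+2), (2 * qb (2*j)) * (2 * (4:ℚ)^(m+1-j) * qb (2*(m+1-j))) := by
    rw [show 2*m+2+1 = 2*(m+1)+1 by ring, sum_even_vanish _ (fun j => by
      rw [coeff_E_odd ⟨j, by ring⟩, zero_mul]) (m+1)]
    refine Finset.sum_congr rfl fun j hj => ?_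
    rw [mem_range] at hj
    have he : 2*m+2-2*j = 2*(m+1-j) := by omega
    rw [coeff_E, coeff_F, if_neg (by omega), if_neg (by omega), he]
    have : (2:ℚ) ^ (2*(m+1-j)) = (4:ℚ)^(m+1-j) := by
      rw [pow_mul]; norm_num
    rw [this]
    ring
  have hR : ∑ k ∈ range (2*m+2+1),
      coeff k (2 * bernoulliPowerSeries ℚ + X) *
        coeff (2*m+2-k) (2 * bernoulliPowerSeries ℚ + X) =
      ∑ j ∈ range (m+2), (2 * qb (2*j)) * (2 * qb (2*(m+1-j))) := by
    rw [show 2*m+2+1 = 2*(m+1)+1 by ring, sum_even_vanish _ (fun j => by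
      rw [coeff_E_odd ⟨j, by ring⟩, zero_mul]) (m+1)]
    refine Finset.sum_congr rfl fun j hj => ?_
    rw [mem_range] at hj
    have he : 2*m+2-2*j = 2*(m+1-j) := by omega
    rw [coeff_E, coeff_E, if_neg (by omega), if_neg (by omega), he]
    ring
  rw [hL, hR, add_zero] at h
  have h4 : (4:ℚ) * (∑ k ∈ range (m+2), (4:ℚ)^(m+1-k) * (qb (2*k) * qb (2*(m+1-k)))) =
      (4:ℚ) * ∑ k ∈ range (m+2), qb (2*k) * qb (2*(m+1-k)) := by
    calc (4:ℚ) * (∑ k ∈ range (m+2), (4:ℚ)^(m+1-k) * (qb (2*k) * qb (2*(m+1-k))))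
        = ∑ j ∈ range (m+2), (2 * qb (2*j)) * (2 * (4:ℚ)^(m+1-j) * qb (2*(m+1-j))) := by
          rw [Finset.mul_sum]; exact Finset.sum_congr rfl fun j _ => by ring
      _ = ∑ j ∈ range (m+2), (2 * qb (2*j)) * (2 * qb (2*(m+1-j))) := h
      _ = (4:ℚ) * ∑ k ∈ range (m+2), qb (2*k) * qb (2*(m+1-k)) := by
          rw [Finset.mul_sum]; exact (Finset.sum_congr rfl fun j _ => by ring).symm
  exact mul_left_cancel₀ (by norm_num : (4:ℚ) ≠ 0) h4

end aux

lemma lambda_eq (j : ℕ) (hj : j ≠ 0) :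
    dirichletLambda (2*j) =
      (1 - ((4:ℝ))⁻¹^j) * ((-1 : ℝ)^(j+1) * (2:ℝ)^(2*j-1) * π^(2*j) *
        (bernoulli (2*j) : ℝ) / (Nat.factorial (2*j))) := by
  show (∑' n : ℕ, 1 / (2 * (n : ℝ) + 1) ^ (2*j)) = _
  set Z : ℝ := (-1 : ℝ)^(j+1) * (2:ℝ)^(2*j-1) * π^(2*j) * (bernoulli (2*j) : ℝ) /
    (Nat.factorial (2*j)) with hZ
  have h : HasSum (fun n : ℕ => 1 / (n:ℝ)^(2*j)) Z := hasSum_zeta_nat hj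
  have he : HasSum (fun n : ℕ => 1 / ((2*n : ℕ):ℝ)^(2*j)) (((4:ℝ)⁻¹)^j * Z) := by
    have h2 := h.mul_left (((4:ℝ)⁻¹)^j)
    have hfun : (fun n : ℕ => ((4:ℝ)⁻¹)^j * (1 / (n:ℝ)^(2*j))) =
        fun n : ℕ => 1 / ((2*n : ℕ):ℝ)^(2*j) := by
      funext n
      push_cast
      rw [mul_pow, show (2:ℝ)^(2*j) = 4^j by rw [pow_mul]; norm_num]
      rw [one_div, one_div, mul_inv, inv_pow]
    rwa [hfun] at h2
  have hsumm : Summable (fun n : ℕ => 1 / (2 * (n:ℝ) + 1) ^ (2*j)) := by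
    have hi : Function.Injective (fun n : ℕ => 2*n+1) := fun a b hab => by simpa using hab
    have := h.summable.comp_injective hi
    have hfun : ((fun n : ℕ => 1 / (n:ℝ)^(2*j)) ∘ (fun n : ℕ => 2*n+1)) =
        fun n : ℕ => 1 / (2 * (n:ℝ) + 1) ^ (2*j) := by
      funext n
      simp only [Function.comp]
      push_cast
      ring_nf
    rwa [hfun] at this
  have ho : HasSum (fun n : ℕ => 1 / (2 * (n:ℝ) + 1) ^ (2*j))
      (∑' n : ℕ, 1 / (2 * (n : ℝ) + 1) ^ (2*j)) := hsumm.hasSum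
  have heo : HasSum (fun n : ℕ => 1 / (n:ℝ)^(2*j))
      (((4:ℝ)⁻¹)^j * Z + ∑' n : ℕ, 1 / (2 * (n : ℝ) + 1) ^ (2*j)) := by
    refine HasSum.even_add_odd he ?_
    have hfun : (fun n : ℕ => 1 / ((2*n+1 : ℕ):ℝ)^(2*j)) =
        fun n : ℕ => 1 / (2 * (n:ℝ) + 1) ^ (2*j) := by
      funext n; push_cast; ring_nf
    rwa [hfun]
  have := h.unique heo
  linarith [this]

lemma zeta_val (k : ℕ) : riemannZeta (2*(k:ℂ)) =
    (-1:ℂ)^(k+1) * 4^k * (π:ℂ)^(2*k) * (bernoulli (2*k) : ℂ) /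
      (2*(Nat.factorial (2*k) : ℂ)) := by
  rcases Nat.eq_zero_or_pos k with rfl | hk
  · norm_num [riemannZeta_zero]
  · have h := riemannZeta_two_mul_nat (k := k) (by omega)
    push_cast at h
    rw [h]
    have h2 : (2:ℂ)^(2*k-1) = 4^k / 2 := by
      rw [eq_div_iff (two_ne_zero), ← pow_succ, show 2*k-1+1 = 2*k by omega, pow_mul]
      norm_num
    rw [h2]
    ring

theorem zeta_lambda_convolution (m : ℕ) (hm : 0 < m) :
    ∑ k ∈ Finset.range (m + 1),
      (2 : ℂ) ^ (-(2 * (k : ℤ))) * riemannZeta (2 * (k : ℂ)) *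
        (dirichletLambda (2 * m - 2 * k + 2) : ℂ) = 0 := by
  have hkey : ∑ k ∈ Finset.range (m+1),
      (((4:ℚ)^(m+1-k) - 1) * (qb (2*k) * qb (2*(m+1-k)))) = 0 := by
    have h := keyQ m hm
    have h0 : ∑ k ∈ Finset.range (m+2),
        (((4:ℚ)^(m+1-k) - 1) * (qb (2*k) * qb (2*(m+1-k)))) = 0 := by
      have hsub := sub_eq_zero.mpr h
      rw [← Finset.sum_sub_distrib] at hsub
      rw [← hsub]
      exact Finset.sum_congr rfl fun k _ => by ring
    rw [Finset.sum_range_succ] at h0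
    simpa using h0
  have hterm : ∀ k ∈ Finset.range (m+1),
      (2 : ℂ) ^ (-(2 * (k : ℤ))) * riemannZeta (2 * (k : ℂ)) *
        (dirichletLambda (2 * m - 2 * k + 2) : ℂ)
      = ((-1:ℂ)^(m+1) * (π:ℂ)^(2*(m+1)) / 4) *
          (((((4:ℚ)^(m+1-k) - 1) * (qb (2*k) * qb (2*(m+1-k)))) : ℚ) : ℂ) := by
    intro k hk
    rw [Finset.mem_range] at hk
    obtain ⟨j, hj1, hj2⟩ : ∃ j, m+1-k = j ∧ k + j = m+1 := ⟨m+1-k, rfl, by omega⟩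
    have hjpos : j ≠ 0 := by omega
    have hidx : 2*m - 2*k + 2 = 2*j := by omega
    rw [hidx, hj1, lambda_eq j hjpos, zeta_val k]
    have hz : (2:ℂ)^(-(2*(k:ℤ))) = ((4:ℂ)^k)⁻¹ := by
      rw [show (2*(k:ℤ)) = ((2*k:ℕ):ℤ) by push_cast; ring, zpow_neg, zpow_natCast, pow_mul]
      norm_num
    rw [hz]
    have h2j : (2:ℂ)^(2*j-1) = 4^j / 2 := by
      rw [eq_div_iff (two_ne_zero), ← pow_succ, show 2*j-1+1 = 2*j by omega, pow_mul]
      norm_num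
    push_cast [qb, h2j]
    rw [show 2*(m+1) = 2*k + 2*j by omega, show m+1 = k+j from hj2.symm]
    have hf1 : ((Nat.factorial (2*k)) : ℂ) ≠ 0 := Nat.cast_ne_zero.mpr (Nat.factorial_ne_zero _)
    have hf2 : ((Nat.factorial (2*j)) : ℂ) ≠ 0 := Nat.cast_ne_zero.mpr (Nat.factorial_ne_zero _)
    have h4k : ((4:ℂ)^k) ≠ 0 := pow_ne_zero _ (by norm_num)
    have h4j : ((4:ℂ)^j) ≠ 0 := pow_ne_zero _ (by norm_num)
    field_simp
    have h14 : (1/4:ℂ)^j * 4^j = 1 := by rw [← mul_pow]; norm_num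
    linear_combination (-((π:ℂ)^(k*2) * (π:ℂ)^(j*2) * (bernoulli (2*k) : ℂ) * (bernoulli (2*j) : ℂ) *
      (-1:ℂ)^k * (-1:ℂ)^j * 4)) * h14
  rw [Finset.sum_congr rfl hterm, ← Finset.mul_sum]
  have : ∑ k ∈ Finset.range (m+1),
      (((((4:ℚ)^(m+1-k) - 1) * (qb (2*k) * qb (2*(m+1-k)))) : ℚ) : ℂ) = 0 := by
    exact_mod_cast congrArg (fun q : ℚ => (q:ℂ)) hkey
  rw [this, mul_zero]
end

section
/- Let m be a positive integer and t a real number. Then Σ_{k=1}^{m} (-1)^k · ( π^{2m-2k}/(2m-2k+1)! ) · ( t^{2k-1}/(2k-1)! ) = - ( (π² + t²)^m / (π·(2m)!) ) · sin( 2m·arctan(t/π) ). -/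
open Real Finset

lemma sum_range_double {M : Type*} [AddCommMonoid M] (f : ℕ → M) (n : ℕ) :
    ∑ j ∈ Finset.range (2 * n), f j = ∑ i ∈ Finset.range n, (f (2 * i) + f (2 * i + 1)) := by
  induction n with
  | zero => simp
  | succ n ih =>
    rw [show 2 * (n + 1) = 2 * n + 1 + 1 by ring, Finset.sum_range_succ, Finset.sum_range_succ,
      ih, Finset.sum_range_succ, add_assoc]

theorem sum_eq_sin_arctan (m : ℕ) (hm : 0 < m) (t : ℝ) :
    ∑ k ∈ Finset.Icc 1 m,
        (-1 : ℝ) ^ k * (π ^ (2 * m - 2 * k) / (Nat.factorial (2 * m - 2 * k + 1))) *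
          (t ^ (2 * k - 1) / (Nat.factorial (2 * k - 1))) =
      -((π ^ 2 + t ^ 2) ^ m / (π * (Nat.factorial (2 * m)))) *
        Real.sin (2 * m * Real.arctan (t / π)) := by
  have hπ : (0:ℝ) < π := Real.pi_pos
  set θ := Real.arctan (t / π) with hθ
  set r := Real.sqrt (π ^ 2 + t ^ 2) with hr
  have hrt : (0:ℝ) < π ^ 2 + t ^ 2 := by positivity
  have hrpos : (0:ℝ) < r := Real.sqrt_pos.2 hrt
  have hsq : Real.sqrt (1 + (t / π) ^ 2) = r / π := by
    rw [show 1 + (t / π) ^ 2 = (π ^ 2 + t ^ 2) / π ^ 2 by field_simp,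
      Real.sqrt_div hrt.le, Real.sqrt_sq hπ.le, hr]
  have hcos : r * Real.cos θ = π := by
    rw [hθ, Real.cos_arctan, hsq]
    field_simp
  have hsin : r * Real.sin θ = t := by
    rw [hθ, Real.sin_arctan, hsq]
    field_simp
  -- polar form
  have hz : ((π : ℂ) + t * Complex.I) = (r : ℂ) * Complex.exp (θ * Complex.I) := by
    rw [Complex.exp_mul_I]
    apply Complex.ext
    · simp only [Complex.add_re, Complex.ofReal_re, Complex.mul_re, Complex.mul_im,
        Complex.I_re, Complex.I_im, Complex.ofReal_im, Complex.add_im, Complex.cos_ofReal_re,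
        Complex.cos_ofReal_im, Complex.sin_ofReal_re, Complex.sin_ofReal_im]
      rw [← hcos]
      try ring
    · simp only [Complex.add_re, Complex.ofReal_re, Complex.mul_re, Complex.mul_im,
        Complex.I_re, Complex.I_im, Complex.ofReal_im, Complex.add_im, Complex.cos_ofReal_re,
        Complex.cos_ofReal_im, Complex.sin_ofReal_re, Complex.sin_ofReal_im]
      rw [← hsin]
      try ring
  have hzpow : (((π : ℂ) + t * Complex.I) ^ (2 * m)).im
      = (π ^ 2 + t ^ 2) ^ m * Real.sin (2 * m * θ) := by
    rw [hz, mul_pow, ← Complex.exp_nat_mul]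
    have h0 : r ^ (2 * m) = (π ^ 2 + t ^ 2) ^ m := by
      rw [pow_mul, hr, Real.sq_sqrt hrt.le]
    have h1 : ((r : ℂ)) ^ (2 * m) = (((π ^ 2 + t ^ 2) ^ m : ℝ) : ℂ) := by
      rw [← Complex.ofReal_pow, h0]
    have h2 : ((2 * m : ℕ) : ℂ) * (θ * Complex.I) = ((2 * m * θ : ℝ) : ℂ) * Complex.I := by
      push_cast; ring
    rw [h1, h2, Complex.im_ofReal_mul, Complex.exp_ofReal_mul_I_im]
    try push_cast
    try ring
  -- binomial expansion
  have hbin : (((π : ℂ) + t * Complex.I) ^ (2 * m)).im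
      = ∑ k ∈ Finset.Icc 1 m,
          (-1 : ℝ) ^ (k - 1) * (Nat.choose (2 * m) (2 * k - 1)) * t ^ (2 * k - 1)
            * π ^ (2 * m - 2 * k + 1) := by
    rw [add_comm ((π : ℂ)) _, add_pow, Complex.im_sum]
    have hg : ∀ j, ((↑t * Complex.I) ^ j * (π : ℂ) ^ (2 * m - j)
        * ((Nat.choose (2 * m) j : ℕ) : ℂ)).im
        = t ^ j * π ^ (2 * m - j) * (Nat.choose (2 * m) j) * (Complex.I ^ j).im := by
      intro j
      have : (↑t * Complex.I) ^ j * (π : ℂ) ^ (2 * m - j) * ((Nat.choose (2 * m) j : ℕ) : ℂ)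
          = ((t ^ j * π ^ (2 * m - j) * (Nat.choose (2 * m) j) : ℝ) : ℂ) * Complex.I ^ j := by
        push_cast; ring
      rw [this, Complex.im_ofReal_mul]
    simp only [hg]
    rw [Finset.sum_range_succ, sum_range_double]
    have hIeven : ∀ i : ℕ, (Complex.I ^ (2 * i)).im = 0 := by
      intro i
      rw [pow_mul, Complex.I_sq,
        show ((-1 : ℂ)) = (((-1 : ℝ)) : ℂ) by norm_num, ← Complex.ofReal_pow,
        Complex.ofReal_im]
    have hIodd : ∀ i : ℕ, (Complex.I ^ (2 * i + 1)).im = (-1 : ℝ) ^ i := by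
      intro i
      rw [pow_succ, pow_mul, Complex.I_sq,
        show ((-1 : ℂ)) = (((-1 : ℝ)) : ℂ) by norm_num, ← Complex.ofReal_pow,
        Complex.im_ofReal_mul, Complex.I_im, mul_one]
    rw [hIeven m]
    simp only [hIeven, hIodd, mul_zero, zero_add, add_zero]
    rw [show Finset.Icc 1 m = Finset.Ico 1 (m + 1) by rfl, Finset.sum_Ico_eq_sum_range]
    simp only [Nat.add_sub_cancel]
    apply Finset.sum_congr rfl
    intro i hi
    have h1 : 2 * (1 + i) - 1 = 2 * i + 1 := by omega
    have h2 : 2 * m - 2 * (1 + i) + 1 = 2 * m - (2 * i + 1) := by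
      simp only [Finset.mem_range] at hi; omega
    have h3 : (1 + i) - 1 = i := by omega
    rw [h1, h2, h3]
    ring
  have key : ∑ k ∈ Finset.Icc 1 m,
      (-1 : ℝ) ^ (k - 1) * (Nat.choose (2 * m) (2 * k - 1)) * t ^ (2 * k - 1)
        * π ^ (2 * m - 2 * k + 1)
      = (π ^ 2 + t ^ 2) ^ m * Real.sin (2 * m * θ) := by rw [← hbin, hzpow]
  calc ∑ k ∈ Finset.Icc 1 m,
        (-1 : ℝ) ^ k * (π ^ (2 * m - 2 * k) / (Nat.factorial (2 * m - 2 * k + 1))) *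
          (t ^ (2 * k - 1) / (Nat.factorial (2 * k - 1)))
      = ∑ k ∈ Finset.Icc 1 m, (-(1 / (π * (Nat.factorial (2 * m))))) *
          ((-1 : ℝ) ^ (k - 1) * (Nat.choose (2 * m) (2 * k - 1)) * t ^ (2 * k - 1)
            * π ^ (2 * m - 2 * k + 1)) := by
        apply Finset.sum_congr rfl
        intro k hk
        rw [Finset.mem_Icc] at hk
        have hkm : 2 * k - 1 ≤ 2 * m := by omega
        have hC := Nat.choose_mul_factorial_mul_factorial hkm
        rw [show 2 * m - (2 * k - 1) = 2 * m - 2 * k + 1 by omega] at hC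
        have hCr : ((Nat.choose (2 * m) (2 * k - 1) : ℝ))
            * (Nat.factorial (2 * k - 1)) * (Nat.factorial (2 * m - 2 * k + 1))
            = (Nat.factorial (2 * m)) := by exact_mod_cast congrArg (Nat.cast (R := ℝ)) hC
        have hsign : (-1 : ℝ) ^ k = -(-1 : ℝ) ^ (k - 1) := by
          rw [show k = k - 1 + 1 by omega, pow_succ]
          simp
        have hpow : (π : ℝ) ^ (2 * m - 2 * k + 1) = π ^ (2 * m - 2 * k) * π := pow_succ _ _
        have hf1 : ((Nat.factorial (2 * m - 2 * k + 1) : ℝ)) ≠ 0 := by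
          positivity
        have hf2 : ((Nat.factorial (2 * k - 1) : ℝ)) ≠ 0 := by positivity
        have hf3 : ((Nat.factorial (2 * m) : ℝ)) ≠ 0 := by positivity
        have hC0 : ((Nat.choose (2 * m) (2 * k - 1) : ℝ)) ≠ 0 := by
          exact_mod_cast (Nat.choose_pos hkm).ne'
        rw [hsign, hpow, ← hCr]
        field_simp
    _ = (-(1 / (π * (Nat.factorial (2 * m))))) * ((π ^ 2 + t ^ 2) ^ m * Real.sin (2 * m * θ)) := by
        rw [← Finset.mul_sum, key]
    _ = -((π ^ 2 + t ^ 2) ^ m / (π * (Nat.factorial (2 * m)))) * Real.sin (2 * m * θ) := by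
        ring
end

section
/- Let s be a complex number with Re(s) > 1. Then Σ_{n=0}^∞ 1/(2n+1)^s = (1/Γ(s)) · ∫_0^∞ e^t · t^{s-1}/(e^{2t} - 1) dt, where Γ is the Gamma function, t^{s-1} = exp((s-1)·log t) for real t > 0, and the series on the left converges absolutely. -/
open Real MeasureTheory

section Aux

variable (s : ℂ)

lemma lambda_aux_norm (hs : 1 < s.re) {t : ℝ} (ht : 0 < t) :
    ‖Complex.exp t * (t : ℂ) ^ (s - 1) / (Complex.exp (2 * t) - 1)‖ =
      rexp t * t ^ (s.re - 1) / (rexp (2 * t) - 1) := by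
  have h2t : (1 : ℝ) < rexp (2 * t) := by
    rw [← Real.exp_zero]
    exact Real.exp_lt_exp.mpr (by linarith)
  have hden : (Complex.exp (2 * (t : ℂ)) - 1) = ((rexp (2 * t) - 1 : ℝ) : ℂ) := by
    push_cast [← Complex.ofReal_exp]
    norm_num
  simp only [norm_div, norm_mul, hden, Complex.norm_real, Real.norm_eq_abs,
    Complex.norm_exp, Complex.norm_cpow_eq_rpow_re_of_pos ht,
    Complex.sub_re, Complex.one_re, Complex.ofReal_re]
  rw [abs_of_pos (by linarith)]

lemma lambda_aux_meas (S : Set ℝ) (hSm : MeasurableSet S) (hS : S ⊆ Set.Ioi 0) :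
    AEStronglyMeasurable
      (fun t : ℝ => Complex.exp t * (t : ℂ) ^ (s - 1) / (Complex.exp (2 * t) - 1))
      (volume.restrict S) := by
  refine ContinuousOn.aestronglyMeasurable ?_ hSm
  apply ContinuousOn.div
  · exact ((Complex.continuous_exp.comp Complex.continuous_ofReal).continuousOn).mul
      (continuousOn_of_forall_continuousAt fun t ht =>
        Complex.continuousAt_ofReal_cpow_const _ _ (Or.inr (ne_of_gt (hS ht))))
  · exact ((Complex.continuous_exp.comp
      (continuous_const.mul Complex.continuous_ofReal)).sub continuous_const).continuousOn
  · intro t ht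
    have h2t : (1 : ℝ) < rexp (2 * t) := by
      rw [← Real.exp_zero]
      exact Real.exp_lt_exp.mpr (by nlinarith [hS ht, Set.mem_Ioi.mp (hS ht)])
    have hden : (Complex.exp (2 * (t : ℂ)) - 1) = ((rexp (2 * t) - 1 : ℝ) : ℂ) := by
      push_cast [← Complex.ofReal_exp]
      norm_num
    rw [hden]
    exact_mod_cast (by linarith : rexp (2 * t) - 1 ≠ 0)

lemma lambda_aux_integrable (hs : 1 < s.re) :
    IntegrableOn
      (fun t : ℝ => Complex.exp t * (t : ℂ) ^ (s - 1) / (Complex.exp (2 * t) - 1))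
      (Set.Ioi 0) := by
  set f : ℝ → ℂ := fun t => Complex.exp t * (t : ℂ) ^ (s - 1) / (Complex.exp (2 * t) - 1)
    with hf
  have h01 : IntegrableOn f (Set.Ioc 0 1) := by
    have hbound : IntegrableOn (fun t : ℝ => (rexp 1 / 2) * t ^ (s.re - 2)) (Set.Ioc 0 1) := by
      have hio : IntegrableOn (fun t : ℝ => t ^ (s.re - 2)) (Set.Ioc 0 1) := by
        rw [integrableOn_Ioc_iff_integrableOn_Ioo]
        exact (intervalIntegral.integrableOn_Ioo_rpow_iff one_pos).mpr (by linarith)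
      exact hio.const_mul _
    refine Integrable.mono' hbound
      (lambda_aux_meas s _ measurableSet_Ioc (Set.Ioc_subset_Ioi_self)) ?_
    filter_upwards [ae_restrict_mem measurableSet_Ioc] with t ht
    obtain ⟨ht0, ht1⟩ := ht
    rw [hf, lambda_aux_norm s hs ht0]
    have he : 2 * t ≤ rexp (2 * t) - 1 := by
      nlinarith [Real.add_one_le_exp (2 * t)]
    have het : rexp t ≤ rexp 1 := Real.exp_le_exp.mpr ht1
    have h1 : t ^ (s.re - 1) = t ^ (s.re - 2) * t := by
      rw [← Real.rpow_add_one ht0.ne']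
      ring_nf
    have htp : (0:ℝ) < t ^ (s.re - 1) := Real.rpow_pos_of_pos ht0 _
    have htp2 : (0:ℝ) < t ^ (s.re - 2) := Real.rpow_pos_of_pos ht0 _
    rw [div_le_iff₀ (by linarith)]
    calc rexp t * t ^ (s.re - 1) ≤ rexp 1 * t ^ (s.re - 1) := by nlinarith
      _ = (rexp 1 / 2 * t ^ (s.re - 2)) * (2 * t) := by rw [h1]; ring
      _ ≤ (rexp 1 / 2 * t ^ (s.re - 2)) * (rexp (2 * t) - 1) :=
          mul_le_mul_of_nonneg_left he (by positivity)
  have h1i : IntegrableOn f (Set.Ioi 1) := by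
    have hbound0 : IntegrableOn (fun t : ℝ => 2 * (rexp (-t) * t ^ (s.re - 1)))
        (Set.Ioi 0) :=
      (Real.GammaIntegral_convergent (by linarith : (0:ℝ) < s.re)).const_mul 2
    have hbound : IntegrableOn (fun t : ℝ => 2 * (rexp (-t) * t ^ (s.re - 1)))
        (Set.Ioi 1) := hbound0.mono_set (Set.Ioi_subset_Ioi zero_le_one)
    refine Integrable.mono' hbound
      (lambda_aux_meas s _ measurableSet_Ioi (Set.Ioi_subset_Ioi zero_le_one)) ?_
    filter_upwards [ae_restrict_mem measurableSet_Ioi] with t ht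
    have ht0 : (0:ℝ) < t := lt_trans one_pos ht
    rw [hf, lambda_aux_norm s hs ht0]
    have hA : (2:ℝ) ≤ rexp t := by
      calc (2:ℝ) ≤ rexp 1 := by nlinarith [Real.add_one_le_exp (1:ℝ)]
        _ ≤ rexp t := Real.exp_le_exp.mpr ht.le
    have hA2 : rexp (2 * t) = rexp t * rexp t := by
      rw [← Real.exp_add]; ring_nf
    have hden : (0:ℝ) < rexp (2 * t) - 1 := by nlinarith
    have htp : (0:ℝ) ≤ t ^ (s.re - 1) := (Real.rpow_pos_of_pos ht0 _).le
    have hE : (0:ℝ) < rexp t := Real.exp_pos t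
    rw [div_le_iff₀ hden]
    have key : rexp t ≤ 2 * rexp (-t) * (rexp (2 * t) - 1) := by
      rw [Real.exp_neg, hA2]
      have hrw : 2 * (rexp t)⁻¹ * (rexp t * rexp t - 1)
          = 2 * (rexp t * rexp t - 1) / rexp t := by
        field_simp
      rw [hrw, le_div_iff₀ hE]
      nlinarith
    calc rexp t * t ^ (s.re - 1) = t ^ (s.re - 1) * rexp t := by ring
      _ ≤ t ^ (s.re - 1) * (2 * rexp (-t) * (rexp (2 * t) - 1)) :=
          mul_le_mul_of_nonneg_left key htp
      _ = 2 * (rexp (-t) * t ^ (s.re - 1)) * (rexp (2 * t) - 1) := by ring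
  have : Set.Ioi (0:ℝ) = Set.Ioc 0 1 ∪ Set.Ioi 1 := (Set.Ioc_union_Ioi_eq_Ioi zero_le_one).symm
  rw [this]
  exact h01.union h1i

lemma lambda_aux_hasSum (hs : 1 < s.re) :
    HasSum (fun n : ℕ => Complex.Gamma s * 1 / ((2 * (n : ℝ) + 1 : ℝ) : ℂ) ^ s)
      (mellin (fun t : ℝ => Complex.exp t / (Complex.exp (2 * t) - 1)) s) := by
  apply hasSum_mellin (a := fun _ : ℕ => (1 : ℂ)) (p := fun n : ℕ => 2 * n + 1)
  · intro n
    right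
    positivity
  · linarith
  · intro t ht
    have ht : (0:ℝ) < t := ht
    have hr : rexp (-(2 * t)) < 1 := by
      rw [Real.exp_lt_one_iff]; linarith
    have hr0 : (0:ℝ) ≤ rexp (-(2 * t)) := (Real.exp_pos _).le
    have hgeo : HasSum (fun n : ℕ => rexp (-t) * rexp (-(2 * t)) ^ n)
        (rexp (-t) * (1 - rexp (-(2 * t)))⁻¹) :=
      (hasSum_geometric_of_lt_one hr0 hr).mul_left _
    have hterm : ∀ n : ℕ, rexp (-(2 * (n:ℝ) + 1) * t)
        = rexp (-t) * rexp (-(2 * t)) ^ n := by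
      intro n
      rw [← Real.exp_nat_mul, ← Real.exp_add]
      ring_nf
    have hval : rexp (-t) * (1 - rexp (-(2 * t)))⁻¹
        = rexp t / (rexp (2 * t) - 1) := by
      rw [← div_eq_mul_inv, div_eq_div_iff]
      · rw [mul_sub, mul_sub, ← Real.exp_add, ← Real.exp_add]
        norm_num
        congr 1 <;> [skip; congr 1] <;> ring_nf
      · linarith
      · have : (1:ℝ) < rexp (2 * t) := by
          rw [← Real.exp_zero]; exact Real.exp_lt_exp.mpr (by linarith)
        linarith
    rw [hval] at hgeo
    have hC := Complex.hasSum_ofReal.mpr hgeo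
    convert hC using 2 with n
    · rw [one_mul, hterm n]
    · rw [Complex.ofReal_div]
      push_cast [← Complex.ofReal_exp]
      norm_num
  · have hsum : Summable (fun n : ℕ => 1 / ((n:ℝ) + 1) ^ s.re) := by
      have h1 := (Real.summable_one_div_nat_rpow (p := s.re)).mpr (by linarith)
      have h2 := (summable_nat_add_iff 1).mpr h1
      simpa using h2
    apply Summable.of_nonneg_of_le (fun n => by positivity) _ hsum
    intro n
    have h1 : ((n:ℝ) + 1) ≤ 2 * n + 1 := by
      have : (0:ℝ) ≤ n := Nat.cast_nonneg n
      linarith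
    have h2 : ((n:ℝ) + 1) ^ s.re ≤ (2 * n + 1) ^ s.re :=
      Real.rpow_le_rpow (by positivity) h1 (by linarith)
    simp only [norm_one]
    exact one_div_le_one_div_of_le (by positivity) h2

end Aux

theorem lambda_integral_representation (s : ℂ) (hs : 1 < s.re) :
    Summable (fun n : ℕ => 1 / (2 * (n : ℂ) + 1) ^ s) ∧
      IntegrableOn
        (fun t : ℝ => Complex.exp t * (t : ℂ) ^ (s - 1) / (Complex.exp (2 * t) - 1))
        (Set.Ioi 0) ∧
      ∑' n : ℕ, 1 / (2 * (n : ℂ) + 1) ^ s =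
        (1 / Complex.Gamma s) *
          ∫ t in Set.Ioi (0 : ℝ),
            Complex.exp t * (t : ℂ) ^ (s - 1) / (Complex.exp (2 * t) - 1) := by
  have hΓ : Complex.Gamma s ≠ 0 := Complex.Gamma_ne_zero_of_re_pos (by linarith)
  have H := lambda_aux_hasSum s hs
  have hmel : mellin (fun t : ℝ => Complex.exp t / (Complex.exp (2 * t) - 1)) s
      = ∫ t in Set.Ioi (0 : ℝ),
          Complex.exp t * (t : ℂ) ^ (s - 1) / (Complex.exp (2 * t) - 1) := by
    rw [mellin]
    refine setIntegral_congr_fun measurableSet_Ioi (fun t ht => ?_)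
    simp only [smul_eq_mul]
    ring
  rw [hmel] at H
  have hcast : ∀ n : ℕ, ((2 * (n : ℝ) + 1 : ℝ) : ℂ) = 2 * (n : ℂ) + 1 := by
    intro n; push_cast; ring
  simp_rw [hcast, mul_one] at H
  have H2 : HasSum (fun n : ℕ => 1 / (2 * (n : ℂ) + 1) ^ s)
      ((∫ t in Set.Ioi (0 : ℝ),
          Complex.exp t * (t : ℂ) ^ (s - 1) / (Complex.exp (2 * t) - 1)) / Complex.Gamma s) := by
    refine (H.div_const (Complex.Gamma s)).congr_fun fun n => ?_
    rw [div_div, mul_comm ((2 * (n:ℂ) + 1) ^ s), ← div_div, div_self hΓ]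
  exact ⟨H2.summable, lambda_aux_integrable s hs,
    by rw [H2.tsum_eq, div_eq_mul_inv, mul_comm, one_div]⟩
end
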